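/- Let w, n, s, d be positive integers with s ≥ log w and let ε ∈ (0,1). Suppose there exists a (2s, ε/(3n))-extractor Ext : {0,1}^{3s} × {0,1}^d → {0,1}^s. Let X be uniform on {0,1}^{3s} and Y₁,…,Yₙ be uniform on {0,1}^d, all mutually independent. Then for every f ∈ B(n,s,w), |E[f(Ext(X,Y₁), Ext(X,Y₂), …, Ext(X,Yₙ))] − E_{x uniform on ({0,1}^s)^n}[f(x)]| ≤ ε. -/

import Mathlib

open Real Finset
open scoped Classical

noncomputable section

/-- Expectation of a real-valued function under the uniform distribution on a finite type. -/
def uniformExp {α : Type*} [Fintype α] (f : α → ℝ) : ℝ :=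
  (∑ x, f x) / (Fintype.card α)

/-- A read-once branching program of length `n`, alphabet `{0,1}^s`, width `w`. -/
structure ROBP (n s w : ℕ) where
  δ : Fin n → Fin w → (Fin s → Bool) → Fin w
  start : Fin w
  accept : Finset (Fin w)

def ROBP.run {n s w : ℕ} (P : ROBP n s w) (x : Fin n → Fin s → Bool) : Fin w :=
  Fin.foldl n (fun v i => P.δ i v (x i)) P.start

def ROBP.fn {n s w : ℕ} (P : ROBP n s w) (x : Fin n → Fin s → Bool) : ℝ :=
  if P.run x ∈ P.accept then 1 else 0

/-- The class of functions computed by ROBPs of length `n`, alphabet `{0,1}^s`, width `w`. -/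
def Bclass (n s w : ℕ) : Set ((Fin n → Fin s → Bool) → ℝ) :=
  {f | ∃ P : ROBP n s w, f = P.fn}

/-- `(G, σ)` is a `W`-bounded `ε`-WPRG for the class `F`. -/
def IsWPRG {n s : ℕ} {ι : Type} [Fintype ι]
    (F : Set ((Fin n → Fin s → Bool) → ℝ))
    (G : ι → Fin n → Fin s → Bool) (σ : ι → ℝ) (W ε : ℝ) : Prop :=
  (∀ r, |σ r| ≤ W) ∧
  ∀ f ∈ F, |uniformExp f - uniformExp (fun r => σ r * f (G r))| ≤ ε

/-- `G` is an `ε`-PRG for the class `F`. -/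
def IsPRG {n s : ℕ} {ι : Type} [Fintype ι]
    (F : Set ((Fin n → Fin s → Bool) → ℝ))
    (G : ι → Fin n → Fin s → Bool) (ε : ℝ) : Prop :=
  ∀ f ∈ F, |uniformExp f - uniformExp (fun r => f (G r))| ≤ ε

/-- `(R, σ)` is a `(log₂ card ι, K, ε)`-weighted pseudorandom reduction from `F₀` to `F₁`. -/
def IsWPR {n₀ s₀ n₁ s₁ : ℕ} {ι : Type} [Fintype ι]
    (F₀ : Set ((Fin n₀ → Fin s₀ → Bool) → ℝ))
    (F₁ : Set ((Fin n₁ → Fin s₁ → Bool) → ℝ))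
    (R : (Fin n₁ → Fin s₁ → Bool) → ι → Fin n₀ → Fin s₀ → Bool)
    (σ : ι → ℝ) (K ε : ℝ) : Prop :=
  (∀ f ∈ F₀,
      |uniformExp f - uniformExp (fun i => σ i * uniformExp (fun x => f (R x i)))| ≤ ε) ∧
  (∀ i, |σ i| ≤ K) ∧
  (∀ f ∈ F₀, ∀ i, (fun x => f (R x i)) ∈ F₁)

def ROBP.Regular {n s w : ℕ} (P : ROBP n s w) : Prop :=
  ∀ (i : Fin n) (v : Fin w),
    (Finset.univ.filter (fun ux : Fin w × (Fin s → Bool) => P.δ i ux.1 ux.2 = v)).card = 2 ^ s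

def ROBP.Permutation {n s w : ℕ} (P : ROBP n s w) : Prop :=
  ∀ (i : Fin n) (x : Fin s → Bool), Function.Bijective (fun u => P.δ i u x)

/-- Regular ROBPs of length `n`, alphabet `{0,1}^s`, width `w`. -/
def Rclass (n s w : ℕ) : Set ((Fin n → Fin s → Bool) → ℝ) :=
  {f | ∃ P : ROBP n s w, P.Regular ∧ f = P.fn}

/-- Permutation ROBPs of length `n` over `{0,1}^s`, unbounded width, a single accept node. -/
def Pclass (n s : ℕ) : Set ((Fin n → Fin s → Bool) → ℝ) :=
  {f | ∃ (w : ℕ) (P : ROBP n s w), P.Permutation ∧ P.accept.card = 1 ∧ f = P.fn}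

/-- Permutation ROBPs of length `n`, alphabet `{0,1}^s`, width `w`, arbitrary accept set. -/
def PermClass (n s w : ℕ) : Set ((Fin n → Fin s → Bool) → ℝ) :=
  {f | ∃ P : ROBP n s w, P.Permutation ∧ f = P.fn}

/-- Run `P` starting from node `v` in layer `i` (only the transitions from layer `i` on are applied). -/
def ROBP.runFrom {n s w : ℕ} (P : ROBP n s w) (i : ℕ) (v : Fin w)
    (x : Fin n → Fin s → Bool) : Fin w :=
  Fin.foldl n (fun u j => if i ≤ (j : ℕ) then P.δ j u (x j) else u) v

/-- Acceptance probability of the subprogram of `P` started at node `v` of layer `i`. -/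
def ROBP.valueAt {n s w : ℕ} (P : ROBP n s w) (i : ℕ) (v : Fin w) : ℝ :=
  uniformExp (fun x : Fin n → Fin s → Bool => if P.runFrom i v x ∈ P.accept then (1 : ℝ) else 0)

/-- The weight `W(f)` of an ROBP: the sum over all edges of the differences of acceptance values. -/
def ROBP.weight {n s w : ℕ} (P : ROBP n s w) : ℝ :=
  ∑ i : Fin n, ∑ u : Fin w, ∑ x : Fin s → Bool,
    |P.valueAt ((i : ℕ) + 1) (P.δ i u x) - P.valueAt (i : ℕ) u|

/-- `(k,ε)`-extractor. -/
def IsExtractor (N d m : ℕ)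
    (Ext : (Fin N → Bool) → (Fin d → Bool) → (Fin m → Bool)) (k ε : ℝ) : Prop :=
  ∀ p : (Fin N → Bool) → ℝ,
    (∀ x, 0 ≤ p x) → (∑ x, p x) = 1 → (∀ x, p x ≤ (2 : ℝ) ^ (-k)) →
    (1 / 2) * ∑ z : Fin m → Bool,
      |(∑ x, ∑ y : Fin d → Bool, p x * (if Ext x y = z then (1 : ℝ) else 0)) / 2 ^ d
        - 1 / 2 ^ m| ≤ ε

/-- `(α,γ)`-averaging sampler. -/
def IsAvgSampler (r p q : ℕ)
    (Samp : (Fin r → Bool) → (Fin p → Bool) → (Fin q → Bool)) (α γ : ℝ) : Prop :=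
  ∀ f : (Fin q → Bool) → ℝ, (∀ z, -1 ≤ f z ∧ f z ≤ 1) →
    (∑ x : Fin r → Bool,
        if α ≤ |(∑ y : Fin p → Bool, f (Samp x y)) / 2 ^ p - uniformExp f| then (1 : ℝ) else 0)
      / 2 ^ r ≤ γ

/-- The matrix norm `‖M‖₁ = max_i Σ_j |M i j|`. -/
def matOneNorm {w : ℕ} (M : Matrix (Fin w) (Fin w) ℝ) : ℝ :=
  ⨆ i, ∑ j, |M i j|

end
-- ======================= Auxiliary material for STATEMENT 4 =======================
section Stmt4Aux

open Finset

private lemma st4_foldl_congr {α : Type*} {n : ℕ} (f g : α → Fin n → α) (v : α)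
    (h : ∀ u j, f u j = g u j) : Fin.foldl n f v = Fin.foldl n g v := by
  have : f = g := funext fun u => funext fun j => h u j
  rw [this]

private lemma st4_foldl_guard_step {α : Type*} :
    ∀ (n k : ℕ) (hk : k < n) (F : Fin n → α → α) (v : α),
    Fin.foldl n (fun u j => if k + 1 ≤ (j : ℕ) then F j u else u) (F ⟨k, hk⟩ v)
      = Fin.foldl n (fun u j => if k ≤ (j : ℕ) then F j u else u) v := by
  intro n
  induction n with
  | zero => intro k hk; exact absurd hk (Nat.not_lt_zero k)
  | succ m ih =>
    intro k hk F v
    rw [Fin.foldl_succ, Fin.foldl_succ]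
    match k with
    | 0 =>
      simp only [Fin.val_succ, Fin.val_zero]
      simp only [show ¬ (0 + 1 ≤ 0) by omega, show (0:ℕ) ≤ 0 from le_refl 0, ↓reduceIte]
      have h0 : (⟨0, hk⟩ : Fin (m + 1)) = 0 := rfl
      rw [h0]
      apply st4_foldl_congr
      intro u j
      rw [if_pos (by omega), if_pos (by omega)]
    | (k' + 1) =>
      simp only [Fin.val_succ, Fin.val_zero]
      simp only [show ¬ (k' + 1 + 1 ≤ 0) by omega, show ¬ (k' + 1 ≤ 0) by omega, ↓reduceIte]
      have hk' : k' < m := by omega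
      have hmk : (⟨k' + 1, hk⟩ : Fin (m + 1)) = (⟨k', hk'⟩ : Fin m).succ := rfl
      rw [hmk]
      have := ih k' hk' (fun i => F i.succ) v
      calc Fin.foldl m (fun u (j : Fin m) => if k' + 1 + 1 ≤ ((j.succ : Fin (m+1)) : ℕ) then F j.succ u else u)
            ((fun i => F i.succ) (⟨k', hk'⟩ : Fin m) v)
          = Fin.foldl m (fun u (j : Fin m) => if k' + 1 ≤ (j : ℕ) then (fun i => F i.succ) j u else u)
            ((fun i => F i.succ) (⟨k', hk'⟩ : Fin m) v) := by
            apply st4_foldl_congr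
            intro u j
            simp only [Fin.val_succ]
            by_cases hc : k' + 1 ≤ (j : ℕ)
            · rw [if_pos (by omega), if_pos hc]
            · rw [if_neg (by omega), if_neg hc]
        _ = Fin.foldl m (fun u (j : Fin m) => if k' ≤ (j : ℕ) then (fun i => F i.succ) j u else u) v := this
        _ = Fin.foldl m (fun u (j : Fin m) => if k' + 1 ≤ ((j.succ : Fin (m+1)) : ℕ) then F j.succ u else u) v := by
            apply st4_foldl_congr
            intro u j
            simp only [Fin.val_succ]
            by_cases hc : k' ≤ (j : ℕ)
            · rw [if_pos hc, if_pos (by omega)]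
            · rw [if_neg hc, if_neg (by omega)]

/-- The state of the branching program after reading the first `k` symbols. -/
def st4_stateAt {n s w : ℕ} (P : ROBP n s w) (x : Fin n → Fin s → Bool) : ℕ → Fin w
  | 0 => P.start
  | k + 1 => if h : k < n then P.δ ⟨k, h⟩ (st4_stateAt P x k) (x ⟨k, h⟩) else st4_stateAt P x k

private lemma st4_run_eq_runFrom {n s w : ℕ} (P : ROBP n s w) (x : Fin n → Fin s → Bool) :
    ∀ k, k ≤ n → P.run x = P.runFrom k (st4_stateAt P x k) x := by
  intro k
  induction k with
  | zero =>
    intro _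
    unfold ROBP.run ROBP.runFrom st4_stateAt
    apply st4_foldl_congr
    intro u j
    rw [if_pos (Nat.zero_le _)]
  | succ k ih =>
    intro hk1
    have hkn : k < n := hk1
    rw [ih (le_of_lt hkn)]
    unfold ROBP.runFrom
    rw [show st4_stateAt P x (k+1) = P.δ ⟨k, hkn⟩ (st4_stateAt P x k) (x ⟨k, hkn⟩) by
      simp [st4_stateAt, dif_pos hkn]]
    exact (st4_foldl_guard_step n k hkn (fun j u => P.δ j u (x j)) (st4_stateAt P x k)).symm

private lemma st4_stateAt_congr {n s w : ℕ} (P : ROBP n s w) (x x' : Fin n → Fin s → Bool) :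
    ∀ k, (∀ j : Fin n, (j : ℕ) < k → x j = x' j) → st4_stateAt P x k = st4_stateAt P x' k := by
  intro k
  induction k with
  | zero => intro _; rfl
  | succ k ih =>
    intro h
    simp only [st4_stateAt]
    by_cases hkn : k < n
    · rw [dif_pos hkn, dif_pos hkn, ih (fun j hj => h j (by omega)), h ⟨k, hkn⟩ (Nat.lt_succ_self k)]
    · rw [dif_neg hkn, dif_neg hkn, ih (fun j hj => h j (by omega))]

private lemma st4_runFrom_congr {n s w : ℕ} (P : ROBP n s w) (k : ℕ) (v : Fin w)
    (x x' : Fin n → Fin s → Bool) (h : ∀ j : Fin n, k ≤ (j : ℕ) → x j = x' j) :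
    P.runFrom k v x = P.runFrom k v x' := by
  unfold ROBP.runFrom
  apply st4_foldl_congr
  intro u j
  by_cases hj : k ≤ (j : ℕ)
  · rw [if_pos hj, if_pos hj, h j hj]
  · rw [if_neg hj, if_neg hj]

/-- Resampling: summing over a fresh value at one coordinate just multiplies by the card. -/
private lemma st4_sum_resample {ι β : Type*} [Fintype ι] [Fintype β] [DecidableEq ι]
    (F : (ι → β) → ℝ) (k : ι) :
    ∑ y : ι → β, ∑ c : β, F (Function.update y k c)
      = (Fintype.card β : ℝ) * ∑ y : ι → β, F y := by
  have hb : Function.Bijective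
      (fun p : (ι → β) × β => (Function.update p.1 k p.2, p.1 k)) := by
    apply Function.Involutive.bijective
    intro p
    simp [Function.update_idem, Function.update_self, Function.update_eq_self]
  have hkey := Fintype.sum_bijective _ hb
    (fun p : (ι → β) × β => F (Function.update p.1 k p.2)) (fun p => F p.1) (fun p => rfl)
  calc ∑ y : ι → β, ∑ c : β, F (Function.update y k c)
      = ∑ p : (ι → β) × β, F (Function.update p.1 k p.2) :=
        (Fintype.sum_prod_type (f := fun p : (ι → β) × β => F (Function.update p.1 k p.2))).symm
    _ = ∑ p : (ι → β) × β, F p.1 := hkey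
    _ = ∑ y : ι → β, ∑ _c : β, F y :=
        Fintype.sum_prod_type (f := fun p : (ι → β) × β => F p.1)
    _ = (Fintype.card β : ℝ) * ∑ y : ι → β, F y := by
        simp [Finset.sum_const, Finset.card_univ, nsmul_eq_mul, Finset.mul_sum]

/-- The deviation of the extractor's output distribution, per input `x`. -/
noncomputable def st4_phi (s d : ℕ) (Ext : (Fin (3*s) → Bool) → (Fin d → Bool) → (Fin s → Bool))
    (z : Fin s → Bool) (x : Fin (3*s) → Bool) : ℝ :=
  (∑ y : Fin d → Bool, if Ext x y = z then (1:ℝ) else 0) / 2 ^ d - 1 / 2 ^ s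

private lemma st4_phi_sum_zero {s d : ℕ}
    (Ext : (Fin (3*s) → Bool) → (Fin d → Bool) → (Fin s → Bool)) (x : Fin (3*s) → Bool) :
    ∑ z : Fin s → Bool, st4_phi s d Ext z x = 0 := by
  unfold st4_phi
  rw [Finset.sum_sub_distrib, ← Finset.sum_div, Finset.sum_comm]
  have h1 : ∀ y : Fin d → Bool, ∑ z : Fin s → Bool, (if Ext x y = z then (1:ℝ) else 0) = 1 := by
    intro y
    simp [Finset.sum_ite_eq]
  rw [Finset.sum_congr rfl fun y _ => h1 y]
  have hcardd : (Fintype.card (Fin d → Bool) : ℝ) = 2 ^ d := by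
    simp [Fintype.card_fun]
  have hcards : (Fintype.card (Fin s → Bool) : ℝ) = 2 ^ s := by
    simp [Fintype.card_fun]
  rw [Finset.sum_const, Finset.sum_const, Finset.card_univ, Finset.card_univ,
    nsmul_eq_mul, nsmul_eq_mul, hcardd, hcards]
  have h2d : (2:ℝ) ^ d ≠ 0 := by positivity
  have h2s : (2:ℝ) ^ s ≠ 0 := by positivity
  field_simp
  ring

/-- Key bound: the contribution of a fiber `S` of the source to the statistical
distance is at most `ε' * (|S|/2^(3s) + 2/2^s)`. -/
private lemma st4_fiber_bound {s d : ℕ} (hs : 1 ≤ s)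
    (Ext : (Fin (3*s) → Bool) → (Fin d → Bool) → (Fin s → Bool))
    (ε' : ℝ) (hε' : 0 ≤ ε')
    (hExt : ∀ p : (Fin (3*s) → Bool) → ℝ, (∀ x, 0 ≤ p x) → (∑ x, p x) = 1 →
      (∀ x, p x ≤ ((2:ℝ) ^ (2*s))⁻¹) →
      (1/2) * ∑ z : Fin s → Bool, |∑ x, p x * st4_phi s d Ext z x| ≤ ε')
    (S : Finset (Fin (3*s) → Bool)) :
    (1/2) * ∑ z : Fin s → Bool, |(∑ x ∈ S, st4_phi s d Ext z x) / 2^(3*s)|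
      ≤ ε' * ((S.card : ℝ)/2^(3*s) + 2/(2^s)) := by
  have hcard : Fintype.card (Fin (3*s) → Bool) = 2^(3*s) := by
    simp [Fintype.card_fun]
  have hSle : S.card ≤ 2^(3*s) := hcard ▸ S.card_le_univ
  have hN3 : (0:ℝ) < 2^(3*s) := by positivity
  have hM : (0:ℝ) < 2^(2*s) := by positivity
  have h2s : (0:ℝ) < 2^s := by positivity
  have hsplit : (2:ℝ)^(3*s) = 2^(2*s) * 2^s := by
    rw [← pow_add]; congr 1; ring
  have h2le : (2:ℝ) ≤ 2^s := by
    calc (2:ℝ) = 2^1 := (pow_one 2).symm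
    _ ≤ 2^s := pow_le_pow_right₀ one_le_two hs
  by_cases hbig : 2^(2*s) ≤ S.card
  · -- large fiber : uniform distribution on `S` has min-entropy ≥ 2s
    have hc0 : 0 < S.card := lt_of_lt_of_le (Nat.pow_pos (by norm_num)) hbig
    have hc0R : (0:ℝ) < (S.card : ℝ) := by exact_mod_cast hc0
    have hMc : (2:ℝ)^(2*s) ≤ (S.card : ℝ) := by exact_mod_cast hbig
    set p : (Fin (3*s) → Bool) → ℝ := fun x => if x ∈ S then ((S.card : ℝ))⁻¹ else 0 with hp
    have hp0 : ∀ x, 0 ≤ p x := fun x => by rw [hp]; dsimp only; split <;> positivity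
    have hpsum : ∑ x, p x = 1 := by
      rw [hp]; dsimp only
      rw [Finset.sum_ite_mem, Finset.univ_inter, Finset.sum_const, nsmul_eq_mul]
      exact mul_inv_cancel₀ (ne_of_gt hc0R)
    have hpbd : ∀ x, p x ≤ ((2:ℝ)^(2*s))⁻¹ := by
      intro x; rw [hp]; dsimp only; split
      · exact inv_anti₀ hM hMc
      · positivity
    have hkey : ∀ z, ∑ x, p x * st4_phi s d Ext z x
        = (∑ x ∈ S, st4_phi s d Ext z x) / (S.card : ℝ) := by
      intro z
      simp only [hp, ite_mul, zero_mul]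
      rw [Finset.sum_ite_mem, Finset.univ_inter, ← Finset.mul_sum, inv_mul_eq_div]
    have hext := hExt p hp0 hpsum hpbd
    have habs : ∀ z, |(∑ x ∈ S, st4_phi s d Ext z x) / 2^(3*s)|
        = ((S.card : ℝ) / 2^(3*s)) * |∑ x, p x * st4_phi s d Ext z x| := by
      intro z
      rw [hkey z, abs_div, abs_div, abs_of_pos hc0R, abs_of_pos hN3]
      field_simp
    calc (1/2) * ∑ z : Fin s → Bool, |(∑ x ∈ S, st4_phi s d Ext z x) / 2^(3*s)|
        = ((S.card : ℝ) / 2^(3*s))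
            * ((1/2) * ∑ z : Fin s → Bool, |∑ x, p x * st4_phi s d Ext z x|) := by
          rw [Finset.sum_congr rfl fun z _ => habs z, ← Finset.mul_sum]; ring
      _ ≤ ((S.card : ℝ) / 2^(3*s)) * ε' := by
          apply mul_le_mul_of_nonneg_left hext (by positivity)
      _ ≤ ε' * ((S.card : ℝ)/2^(3*s) + 2/(2^s)) := by
          rw [mul_comm]
          exact mul_le_mul_of_nonneg_left (le_add_of_nonneg_right (by positivity)) hε'
  · -- small fiber : scale by 2^s and pad with the uniform distribution on `Sᶜ`
    push_neg at hbig
    have hcM : (S.card : ℝ) ≤ 2^(2*s) := by exact_mod_cast hbig.le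
    have hc0 : (0:ℝ) ≤ (S.card : ℝ) := by positivity
    have hD : (2:ℝ)^(2*s) ≤ 2^(3*s) - (S.card : ℝ) := by nlinarith
    have hDpos : (0:ℝ) < 2^(3*s) - (S.card : ℝ) := lt_of_lt_of_le hM hD
    set b : ℝ := (1 - (S.card : ℝ)/2^(2*s)) / (2^(3*s) - (S.card : ℝ)) with hbdef
    have hnum0 : 0 ≤ 1 - (S.card : ℝ)/2^(2*s) := by
      rw [sub_nonneg]; exact div_le_one_of_le₀ hcM hM.le
    have hnum1 : 1 - (S.card : ℝ)/2^(2*s) ≤ 1 := by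
      have h := div_nonneg hc0 hM.le
      linarith
    have hb0 : 0 ≤ b := div_nonneg hnum0 hDpos.le
    have hbM : b ≤ ((2:ℝ)^(2*s))⁻¹ := by
      rw [hbdef, ← one_div]
      exact div_le_div₀ zero_le_one hnum1 hM hD
    set p : (Fin (3*s) → Bool) → ℝ := fun x => if x ∈ S then ((2:ℝ)^(2*s))⁻¹ else b with hp
    set r : (Fin (3*s) → Bool) → ℝ :=
      fun x => if x ∈ S then 0 else (2^(3*s) - (S.card:ℝ))⁻¹ with hr
    have hfilt : Finset.univ.filter (fun x : Fin (3*s) → Bool => ¬ x ∈ S) = Sᶜ := by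
      ext; simp
    have hcompl : ((Sᶜ : Finset (Fin (3*s) → Bool)).card : ℝ) = 2^(3*s) - (S.card:ℝ) := by
      rw [Finset.card_compl, hcard, Nat.cast_sub hSle]
      push_cast; ring
    have hp0 : ∀ x, 0 ≤ p x := by
      intro x; rw [hp]; dsimp only; split
      · positivity
      · exact hb0
    have hpsum : ∑ x, p x = 1 := by
      rw [hp]; dsimp only
      rw [Finset.sum_ite, Finset.filter_mem_eq_inter, Finset.univ_inter, hfilt,
        Finset.sum_const, Finset.sum_const, nsmul_eq_mul, nsmul_eq_mul, hcompl, hbdef]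
      field_simp
      ring
    have hpbd : ∀ x, p x ≤ ((2:ℝ)^(2*s))⁻¹ := by
      intro x; rw [hp]; dsimp only; split
      · exact le_refl _
      · exact hbM
    have hr0 : ∀ x, 0 ≤ r x := by
      intro x; rw [hr]; dsimp only; split <;> positivity
    have hrsum : ∑ x, r x = 1 := by
      rw [hr]; dsimp only
      rw [Finset.sum_ite, Finset.filter_mem_eq_inter, Finset.univ_inter, hfilt,
        Finset.sum_const_zero, Finset.sum_const, nsmul_eq_mul, hcompl, zero_add]
      exact mul_inv_cancel₀ (ne_of_gt hDpos)
    have hrbd : ∀ x, r x ≤ ((2:ℝ)^(2*s))⁻¹ := by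
      intro x; rw [hr]; dsimp only; split
      · positivity
      · exact inv_anti₀ hM hD
    have hkeyP : ∀ z, ∑ x, p x * st4_phi s d Ext z x
        = ((2:ℝ)^(2*s))⁻¹ * (∑ x ∈ S, st4_phi s d Ext z x)
          + b * (∑ x ∈ Sᶜ, st4_phi s d Ext z x) := by
      intro z
      simp only [hp, ite_mul]
      rw [Finset.sum_ite, Finset.filter_mem_eq_inter, Finset.univ_inter, hfilt,
        ← Finset.mul_sum, ← Finset.mul_sum]
    have hkeyR : ∀ z, ∑ x, r x * st4_phi s d Ext z x
        = (2^(3*s) - (S.card:ℝ))⁻¹ * (∑ x ∈ Sᶜ, st4_phi s d Ext z x) := by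
      intro z
      simp only [hr, ite_mul, zero_mul]
      rw [Finset.sum_ite, Finset.filter_mem_eq_inter, Finset.univ_inter, hfilt,
        Finset.sum_const_zero, ← Finset.mul_sum, zero_add]
    have hextP := hExt p hp0 hpsum hpbd
    have hextR := hExt r hr0 hrsum hrbd
    have hiden : ∀ z, (∑ x ∈ S, st4_phi s d Ext z x) / 2^(3*s)
        = (1/2^s) * ((∑ x, p x * st4_phi s d Ext z x)
            - (1 - (S.card:ℝ)/2^(2*s)) * (∑ x, r x * st4_phi s d Ext z x)) := by
      intro z
      rw [hkeyP z, hkeyR z, hbdef, hsplit]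
      field_simp
      ring
    have habs : ∀ z, |(∑ x ∈ S, st4_phi s d Ext z x) / 2^(3*s)|
        ≤ (1/2^s) * (|∑ x, p x * st4_phi s d Ext z x|
            + |∑ x, r x * st4_phi s d Ext z x|) := by
      intro z
      rw [hiden z, abs_mul, abs_of_pos (by positivity : (0:ℝ) < 1/2^s)]
      apply mul_le_mul_of_nonneg_left _ (by positivity)
      calc |(∑ x, p x * st4_phi s d Ext z x)
            - (1 - (S.card:ℝ)/2^(2*s)) * (∑ x, r x * st4_phi s d Ext z x)|
          ≤ |∑ x, p x * st4_phi s d Ext z x|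
            + |(1 - (S.card:ℝ)/2^(2*s)) * (∑ x, r x * st4_phi s d Ext z x)| := by
            rw [sub_eq_add_neg]
            exact (abs_add_le _ _).trans (by rw [abs_neg])
        _ ≤ |∑ x, p x * st4_phi s d Ext z x| + |∑ x, r x * st4_phi s d Ext z x| := by
            rw [abs_mul, abs_of_nonneg hnum0]
            have hra := abs_nonneg (∑ x, r x * st4_phi s d Ext z x)
            nlinarith
    calc (1/2) * ∑ z : Fin s → Bool, |(∑ x ∈ S, st4_phi s d Ext z x) / 2^(3*s)|
        ≤ (1/2) * ∑ z : Fin s → Bool, (1/2^s) * (|∑ x, p x * st4_phi s d Ext z x|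
            + |∑ x, r x * st4_phi s d Ext z x|) := by
          apply mul_le_mul_of_nonneg_left (Finset.sum_le_sum fun z _ => habs z) (by norm_num)
      _ = (1/2^s) * (((1/2) * ∑ z : Fin s → Bool, |∑ x, p x * st4_phi s d Ext z x|)
            + ((1/2) * ∑ z : Fin s → Bool, |∑ x, r x * st4_phi s d Ext z x|)) := by
          simp only [mul_add, Finset.sum_add_distrib]
          rw [← Finset.mul_sum, ← Finset.mul_sum]
          ring
      _ ≤ (1/2^s) * (ε' + ε') := by
          apply mul_le_mul_of_nonneg_left (add_le_add hextP hextR) (by positivity)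
      _ ≤ ε' * ((S.card : ℝ)/2^(3*s) + 2/(2^s)) := by
          have h1 : (1/2^s) * (ε' + ε') = ε' * (2/2^s) := by ring
          rw [h1]
          apply mul_le_mul_of_nonneg_left (le_add_of_nonneg_left (by positivity)) hε'


/-- Core lemma: conditioned on any state function `V` of the uniform source `x`,
the extractor output fools any `[0,1]`-valued test `g` that may depend on the state. -/
private lemma st4_core {s d w : ℕ} (hs : 1 ≤ s) (hw : (w:ℝ) ≤ 2 ^ s)
    (Ext : (Fin (3*s) → Bool) → (Fin d → Bool) → (Fin s → Bool))
    (ε' : ℝ) (hε' : 0 ≤ ε')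
    (hExt : ∀ p : (Fin (3*s) → Bool) → ℝ, (∀ x, 0 ≤ p x) → (∑ x, p x) = 1 →
      (∀ x, p x ≤ ((2:ℝ) ^ (2*s))⁻¹) →
      (1/2) * ∑ z : Fin s → Bool, |∑ x, p x * st4_phi s d Ext z x| ≤ ε')
    (V : (Fin (3*s) → Bool) → Fin w) (g : Fin w → (Fin s → Bool) → ℝ)
    (hg0 : ∀ v ζ, 0 ≤ g v ζ) (hg1 : ∀ v ζ, g v ζ ≤ 1) :
    |(∑ x, ∑ y : Fin d → Bool, g (V x) (Ext x y)) / (2 ^ (3*s) * 2 ^ d)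
      - (∑ x, ∑ ζ : Fin s → Bool, g (V x) ζ) / (2 ^ (3*s) * 2 ^ s)| ≤ 3 * ε' := by
  have hN3 : (0:ℝ) < 2^(3*s) := by positivity
  have h2d : (0:ℝ) < 2^d := by positivity
  have h2s : (0:ℝ) < 2^s := by positivity
  have hcard : Fintype.card (Fin (3*s) → Bool) = 2^(3*s) := by
    simp [Fintype.card_fun]
  -- Step A : collect the y-sum into the extractor deviation functions st4_phi
  have hA : ∀ x, (∑ y : Fin d → Bool, g (V x) (Ext x y))
      = ∑ z : Fin s → Bool,
          g (V x) z * (∑ y : Fin d → Bool, if Ext x y = z then (1:ℝ) else 0) := by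
    intro x
    simp_rw [Finset.mul_sum, mul_ite, mul_one, mul_zero]
    rw [Finset.sum_comm]
    refine Finset.sum_congr rfl fun y _ => ?_
    simp [Finset.sum_ite_eq]
  have hBx : ∀ x, (∑ z : Fin s → Bool, g (V x) z * st4_phi s d Ext z x) / 2^(3*s)
      = (∑ z : Fin s → Bool,
            g (V x) z * (∑ y : Fin d → Bool, if Ext x y = z then (1:ℝ) else 0))
          / (2^(3*s) * 2^d)
        - (∑ ζ : Fin s → Bool, g (V x) ζ) / (2^(3*s) * 2^s) := by
    intro x
    simp only [st4_phi, mul_sub, Finset.sum_sub_distrib, mul_one_div,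
      ← mul_div_assoc, ← Finset.sum_div]
    field_simp
  -- Step B : the difference as a sum of per-fiber deviations
  have hB : ∑ x, (∑ z : Fin s → Bool, g (V x) z * st4_phi s d Ext z x) / 2^(3*s)
      = (∑ x, ∑ y : Fin d → Bool, g (V x) (Ext x y)) / (2 ^ (3*s) * 2 ^ d)
        - (∑ x, ∑ ζ : Fin s → Bool, g (V x) ζ) / (2 ^ (3*s) * 2 ^ s) := by
    rw [Finset.sum_congr rfl fun x _ => hBx x, Finset.sum_sub_distrib,
      ← Finset.sum_div, ← Finset.sum_div, Finset.sum_congr rfl fun x _ => hA x]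
  -- Step C : regroup the x-sum according to the fibers of V
  have hC : ∑ x, (∑ z : Fin s → Bool, g (V x) z * st4_phi s d Ext z x) / 2^(3*s)
      = ∑ v : Fin w, ∑ z : Fin s → Bool,
          g v z * ((∑ x ∈ Finset.univ.filter (fun x => V x = v), st4_phi s d Ext z x)
            / 2^(3*s)) := by
    rw [← Finset.sum_fiberwise Finset.univ V
      (fun x => (∑ z : Fin s → Bool, g (V x) z * st4_phi s d Ext z x) / 2^(3*s))]
    refine Finset.sum_congr rfl fun v _ => ?_
    have h1 : ∀ x ∈ Finset.univ.filter (fun x => V x = v),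
        (∑ z : Fin s → Bool, g (V x) z * st4_phi s d Ext z x) / 2^(3*s)
          = ∑ z : Fin s → Bool, (g v z * st4_phi s d Ext z x) / 2^(3*s) := by
      intro x hx
      rw [(Finset.mem_filter.mp hx).2, Finset.sum_div]
    rw [Finset.sum_congr rfl h1, Finset.sum_comm]
    refine Finset.sum_congr rfl fun z _ => ?_
    rw [← Finset.sum_div, ← Finset.mul_sum, mul_div_assoc]
  -- Step D : the deviations sum to zero over z, so the [0,1] test loses a factor 1/2
  have hE : ∀ v : Fin w,
      |∑ z : Fin s → Bool, g v z
          * ((∑ x ∈ Finset.univ.filter (fun x => V x = v), st4_phi s d Ext z x) / 2^(3*s))|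
        ≤ (1/2) * ∑ z : Fin s → Bool,
            |(∑ x ∈ Finset.univ.filter (fun x => V x = v), st4_phi s d Ext z x) / 2^(3*s)| := by
    intro v
    set t : (Fin s → Bool) → ℝ := fun z =>
      (∑ x ∈ Finset.univ.filter (fun x => V x = v), st4_phi s d Ext z x) / 2^(3*s) with ht
    have hν0 : ∑ z : Fin s → Bool, t z = 0 := by
      rw [ht]; dsimp only
      rw [← Finset.sum_div, Finset.sum_comm]
      rw [Finset.sum_congr rfl fun x _ => st4_phi_sum_zero Ext x]
      simp
    have h1 : ∑ z : Fin s → Bool, g v z * t z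
        = ∑ z : Fin s → Bool, (g v z - 1/2) * t z := by
      simp only [sub_mul]
      rw [Finset.sum_sub_distrib, ← Finset.mul_sum, hν0, mul_zero, sub_zero]
    rw [h1]
    calc |∑ z : Fin s → Bool, (g v z - 1/2) * t z|
        ≤ ∑ z : Fin s → Bool, |(g v z - 1/2) * t z| := Finset.abs_sum_le_sum_abs _ _
      _ ≤ ∑ z : Fin s → Bool, (1/2) * |t z| := by
          refine Finset.sum_le_sum fun z _ => ?_
          rw [abs_mul]
          apply mul_le_mul_of_nonneg_right _ (abs_nonneg _)
          rw [abs_le]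
          constructor
          · linarith [hg0 v z]
          · linarith [hg1 v z]
      _ = (1/2) * ∑ z : Fin s → Bool, |t z| := (Finset.mul_sum _ _ _).symm
  -- Step E : count the fibers
  have hcount : ∑ v : Fin w,
      (((Finset.univ.filter (fun x => V x = v)).card : ℕ) : ℝ) = 2^(3*s) := by
    rw [← Nat.cast_sum]
    rw [← Finset.card_eq_sum_card_fiberwise (fun x _ => Finset.mem_univ (V x))]
    rw [Finset.card_univ, hcard]
    push_cast
    ring
  -- Put everything together
  rw [← hB, hC]
  calc |∑ v : Fin w, ∑ z : Fin s → Bool, g v z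
        * ((∑ x ∈ Finset.univ.filter (fun x => V x = v), st4_phi s d Ext z x) / 2^(3*s))|
      ≤ ∑ v : Fin w, |∑ z : Fin s → Bool, g v z
        * ((∑ x ∈ Finset.univ.filter (fun x => V x = v), st4_phi s d Ext z x) / 2^(3*s))| :=
        Finset.abs_sum_le_sum_abs _ _
    _ ≤ ∑ v : Fin w, ε' * ((((Finset.univ.filter (fun x => V x = v)).card : ℕ) : ℝ)/2^(3*s)
          + 2/(2^s)) := by
        refine Finset.sum_le_sum fun v _ => ?_
        exact (hE v).trans (st4_fiber_bound hs Ext ε' hε' hExt _)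
    _ ≤ 3 * ε' := by
        rw [← Finset.mul_sum]
        have h1 : ∑ v : Fin w, ((((Finset.univ.filter (fun x => V x = v)).card : ℕ) : ℝ)/2^(3*s)
            + 2/(2^s))
            = (∑ v : Fin w, (((Finset.univ.filter (fun x => V x = v)).card : ℕ) : ℝ))/2^(3*s)
              + (w : ℝ) * (2/2^s) := by
          rw [Finset.sum_add_distrib, ← Finset.sum_div, Finset.sum_const, Finset.card_univ,
            Fintype.card_fin, nsmul_eq_mul]
        rw [h1, hcount, div_self (ne_of_gt hN3)]
        have hw2 : (w : ℝ) * (2/2^s) ≤ 2 := by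
          have h3 : (w:ℝ) * (2/2^s) = 2 * (w:ℝ) / 2^s := by ring
          rw [h3, div_le_iff₀ h2s]
          nlinarith
        nlinarith


set_option maxHeartbeats 1000000 in
/-- One step of the hybrid argument. -/
private lemma st4_step {n s w d : ℕ} (hs : 1 ≤ s) (hw : (w:ℝ) ≤ 2 ^ s)
    (P : ROBP n s w)
    (Ext : (Fin (3*s) → Bool) → (Fin d → Bool) → (Fin s → Bool))
    (ε' : ℝ) (hε' : 0 ≤ ε')
    (hExt : ∀ p : (Fin (3*s) → Bool) → ℝ, (∀ x, 0 ≤ p x) → (∑ x, p x) = 1 →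
      (∀ x, p x ≤ ((2:ℝ) ^ (2*s))⁻¹) →
      (1/2) * ∑ z : Fin s → Bool, |∑ x, p x * st4_phi s d Ext z x| ≤ ε')
    (k : ℕ) (hk : k < n) :
    |(∑ x : Fin (3*s) → Bool, ∑ y : Fin n → Fin d → Bool, ∑ zf : Fin n → Fin s → Bool,
        P.fn (fun i => if (i:ℕ) < k+1 then Ext x (y i) else zf i))
        / (2^(3*s) * (((2:ℝ)^d)^n * ((2:ℝ)^s)^n))
      - (∑ x : Fin (3*s) → Bool, ∑ y : Fin n → Fin d → Bool, ∑ zf : Fin n → Fin s → Bool,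
        P.fn (fun i => if (i:ℕ) < k then Ext x (y i) else zf i))
        / (2^(3*s) * (((2:ℝ)^d)^n * ((2:ℝ)^s)^n))| ≤ 3 * ε' := by
  have hN3 : (0:ℝ) < 2^(3*s) := by positivity
  have h2d : (0:ℝ) < 2^d := by positivity
  have h2s : (0:ℝ) < 2^s := by positivity
  have hYZ : (0:ℝ) < ((2:ℝ)^d)^n * ((2:ℝ)^s)^n := by positivity
  set kf : Fin n := ⟨k, hk⟩ with hkf
  set Vf : (Fin n → Fin d → Bool) → (Fin (3*s) → Bool) → Fin w :=
    fun y x => st4_stateAt P (fun i => Ext x (y i)) k with hVf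
  set gf : (Fin n → Fin s → Bool) → Fin w → (Fin s → Bool) → ℝ :=
    fun zf v ζ => if P.runFrom (k+1) (P.δ kf v ζ) zf ∈ P.accept then (1:ℝ) else 0 with hgf
  have hg0 : ∀ zf v ζ, 0 ≤ gf zf v ζ := by
    intro zf v ζ; rw [hgf]; dsimp only; split <;> norm_num
  have hg1 : ∀ zf v ζ, gf zf v ζ ≤ 1 := by
    intro zf v ζ; rw [hgf]; dsimp only; split <;> norm_num
  -- identity for the (k+1)-st hybrid
  have hI1 : ∀ (x : Fin (3*s) → Bool) (y : Fin n → Fin d → Bool)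
      (zf : Fin n → Fin s → Bool),
      P.fn (fun i => if (i:ℕ) < k+1 then Ext x (y i) else zf i)
        = gf zf (Vf y x) (Ext x (y kf)) := by
    intro x y zf
    rw [hgf, hVf]
    unfold ROBP.fn
    set arg : Fin n → Fin s → Bool := fun i => if (i:ℕ) < k+1 then Ext x (y i) else zf i
      with harg
    have h1 : P.run arg = P.runFrom (k+1) (st4_stateAt P arg (k+1)) arg :=
      st4_run_eq_runFrom P arg (k+1) hk
    have h2 : st4_stateAt P arg (k+1) = P.δ kf (st4_stateAt P arg k) (arg kf) := by
      simp [st4_stateAt, dif_pos hk, hkf]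
    have h3 : st4_stateAt P arg k = st4_stateAt P (fun i => Ext x (y i)) k := by
      apply st4_stateAt_congr
      intro j hj
      rw [harg]; dsimp only
      rw [if_pos (by omega)]
    have h4 : arg kf = Ext x (y kf) := by
      rw [harg]; dsimp only
      rw [if_pos (by simp [hkf])]
    have h5 : P.runFrom (k+1)
        (P.δ kf (st4_stateAt P (fun i => Ext x (y i)) k) (Ext x (y kf))) arg
        = P.runFrom (k+1)
        (P.δ kf (st4_stateAt P (fun i => Ext x (y i)) k) (Ext x (y kf))) zf := by
      apply st4_runFrom_congr
      intro j hj
      rw [harg]; dsimp only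
      rw [if_neg (by omega)]
    rw [h1, h2, h3, h4, h5]
  -- identity for the k-th hybrid
  have hI2 : ∀ (x : Fin (3*s) → Bool) (y : Fin n → Fin d → Bool)
      (zf : Fin n → Fin s → Bool),
      P.fn (fun i => if (i:ℕ) < k then Ext x (y i) else zf i)
        = gf zf (Vf y x) (zf kf) := by
    intro x y zf
    rw [hgf, hVf]
    unfold ROBP.fn
    set arg : Fin n → Fin s → Bool := fun i => if (i:ℕ) < k then Ext x (y i) else zf i
      with harg
    have h1 : P.run arg = P.runFrom (k+1) (st4_stateAt P arg (k+1)) arg :=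
      st4_run_eq_runFrom P arg (k+1) hk
    have h2 : st4_stateAt P arg (k+1) = P.δ kf (st4_stateAt P arg k) (arg kf) := by
      simp [st4_stateAt, dif_pos hk, hkf]
    have h3 : st4_stateAt P arg k = st4_stateAt P (fun i => Ext x (y i)) k := by
      apply st4_stateAt_congr
      intro j hj
      rw [harg]; dsimp only
      rw [if_pos (by omega)]
    have h4 : arg kf = zf kf := by
      rw [harg]; dsimp only
      rw [if_neg (by simp [hkf])]
    have h5 : P.runFrom (k+1)
        (P.δ kf (st4_stateAt P (fun i => Ext x (y i)) k) (zf kf)) arg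
        = P.runFrom (k+1)
        (P.δ kf (st4_stateAt P (fun i => Ext x (y i)) k) (zf kf)) zf := by
      apply st4_runFrom_congr
      intro j hj
      rw [harg]; dsimp only
      rw [if_neg (by omega)]
    rw [h1, h2, h3, h4, h5]
  -- resampling the seed used at position k
  have hres1 : ∀ (x : Fin (3*s) → Bool) (zf : Fin n → Fin s → Bool),
      ∑ y : Fin n → Fin d → Bool, gf zf (Vf y x) (Ext x (y kf))
        = (∑ y : Fin n → Fin d → Bool, ∑ c : Fin d → Bool, gf zf (Vf y x) (Ext x c))
          / 2^d := by
    intro x zf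
    have hVupd : ∀ (y : Fin n → Fin d → Bool) (c : Fin d → Bool),
        Vf (Function.update y kf c) x = Vf y x := by
      intro y c
      rw [hVf]; dsimp only
      apply st4_stateAt_congr
      intro j hj
      have hne : j ≠ kf := by
        intro hEq
        rw [hEq, hkf] at hj
        dsimp only at hj
        omega
      rw [Function.update_of_ne hne]
    have h2 : ∑ y : Fin n → Fin d → Bool, ∑ c : Fin d → Bool, gf zf (Vf y x) (Ext x c)
        = (2^d : ℝ) * ∑ y : Fin n → Fin d → Bool, gf zf (Vf y x) (Ext x (y kf)) := by
      calc ∑ y : Fin n → Fin d → Bool, ∑ c : Fin d → Bool, gf zf (Vf y x) (Ext x c)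
          = ∑ y : Fin n → Fin d → Bool, ∑ c : Fin d → Bool,
              (fun y' => gf zf (Vf y' x) (Ext x (y' kf))) (Function.update y kf c) := by
            refine Finset.sum_congr rfl fun y _ => Finset.sum_congr rfl fun c _ => ?_
            show gf zf (Vf y x) (Ext x c)
              = gf zf (Vf (Function.update y kf c) x) (Ext x (Function.update y kf c kf))
            rw [hVupd y c, Function.update_self]
        _ = (Fintype.card (Fin d → Bool) : ℝ)
              * ∑ y : Fin n → Fin d → Bool, gf zf (Vf y x) (Ext x (y kf)) :=
            st4_sum_resample (fun y' => gf zf (Vf y' x) (Ext x (y' kf))) kf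
        _ = (2^d : ℝ) * ∑ y : Fin n → Fin d → Bool, gf zf (Vf y x) (Ext x (y kf)) := by
            congr 1
            simp [Fintype.card_fun]
    rw [eq_div_iff (ne_of_gt h2d)]
    rw [h2]; ring
  -- resampling the fresh uniform symbol at position k
  have hres2 : ∀ (x : Fin (3*s) → Bool) (y : Fin n → Fin d → Bool),
      ∑ zf : Fin n → Fin s → Bool, gf zf (Vf y x) (zf kf)
        = (∑ zf : Fin n → Fin s → Bool, ∑ ζ : Fin s → Bool, gf zf (Vf y x) ζ) / 2^s := by
    intro x y
    have hgupd : ∀ (zf : Fin n → Fin s → Bool) (ζ : Fin s → Bool) (v : Fin w)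
        (ζ' : Fin s → Bool), gf (Function.update zf kf ζ) v ζ' = gf zf v ζ' := by
      intro zf ζ v ζ'
      rw [hgf]; dsimp only
      have : P.runFrom (k+1) (P.δ kf v ζ') (Function.update zf kf ζ)
          = P.runFrom (k+1) (P.δ kf v ζ') zf := by
        apply st4_runFrom_congr
        intro j hj
        have hne : j ≠ kf := by
          intro hEq
          rw [hEq, hkf] at hj
          dsimp only at hj
          omega
        rw [Function.update_of_ne hne]
      rw [this]
    have h2 : ∑ zf : Fin n → Fin s → Bool, ∑ ζ : Fin s → Bool, gf zf (Vf y x) ζ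
        = (2^s : ℝ) * ∑ zf : Fin n → Fin s → Bool, gf zf (Vf y x) (zf kf) := by
      calc ∑ zf : Fin n → Fin s → Bool, ∑ ζ : Fin s → Bool, gf zf (Vf y x) ζ
          = ∑ zf : Fin n → Fin s → Bool, ∑ ζ : Fin s → Bool,
              (fun zf' => gf zf' (Vf y x) (zf' kf)) (Function.update zf kf ζ) := by
            refine Finset.sum_congr rfl fun zf _ => Finset.sum_congr rfl fun ζ _ => ?_
            show gf zf (Vf y x) ζ
              = gf (Function.update zf kf ζ) (Vf y x) (Function.update zf kf ζ kf)
            rw [hgupd, Function.update_self]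
        _ = (Fintype.card (Fin s → Bool) : ℝ)
              * ∑ zf : Fin n → Fin s → Bool, gf zf (Vf y x) (zf kf) :=
            st4_sum_resample (fun zf' => gf zf' (Vf y x) (zf' kf)) kf
        _ = (2^s : ℝ) * ∑ zf : Fin n → Fin s → Bool, gf zf (Vf y x) (zf kf) := by
            congr 1
            simp [Fintype.card_fun]
    rw [eq_div_iff (ne_of_gt h2s)]
    rw [h2]; ring
  -- rewrite both hybrid numerators
  have hnum1 : ∑ x : Fin (3*s) → Bool, ∑ y : Fin n → Fin d → Bool,
      ∑ zf : Fin n → Fin s → Bool, P.fn (fun i => if (i:ℕ) < k+1 then Ext x (y i) else zf i)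
      = (∑ y : Fin n → Fin d → Bool, ∑ zf : Fin n → Fin s → Bool,
          ∑ x : Fin (3*s) → Bool, ∑ c : Fin d → Bool, gf zf (Vf y x) (Ext x c)) / 2^d := by
    calc ∑ x : Fin (3*s) → Bool, ∑ y : Fin n → Fin d → Bool,
        ∑ zf : Fin n → Fin s → Bool, P.fn (fun i => if (i:ℕ) < k+1 then Ext x (y i) else zf i)
        = ∑ x : Fin (3*s) → Bool, ∑ y : Fin n → Fin d → Bool,
            ∑ zf : Fin n → Fin s → Bool, gf zf (Vf y x) (Ext x (y kf)) := by
          exact Finset.sum_congr rfl fun x _ => Finset.sum_congr rfl fun y _ =>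
            Finset.sum_congr rfl fun zf _ => hI1 x y zf
      _ = ∑ x : Fin (3*s) → Bool, ∑ zf : Fin n → Fin s → Bool,
            ∑ y : Fin n → Fin d → Bool, gf zf (Vf y x) (Ext x (y kf)) :=
          Finset.sum_congr rfl fun x _ => Finset.sum_comm
      _ = ∑ x : Fin (3*s) → Bool, ∑ zf : Fin n → Fin s → Bool,
            (∑ y : Fin n → Fin d → Bool, ∑ c : Fin d → Bool, gf zf (Vf y x) (Ext x c))
              / 2^d :=
          Finset.sum_congr rfl fun x _ => Finset.sum_congr rfl fun zf _ => hres1 x zf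
      _ = (∑ x : Fin (3*s) → Bool, ∑ zf : Fin n → Fin s → Bool,
            ∑ y : Fin n → Fin d → Bool, ∑ c : Fin d → Bool, gf zf (Vf y x) (Ext x c))
              / 2^d := by
          simp only [← Finset.sum_div]
      _ = (∑ y : Fin n → Fin d → Bool, ∑ zf : Fin n → Fin s → Bool,
            ∑ x : Fin (3*s) → Bool, ∑ c : Fin d → Bool, gf zf (Vf y x) (Ext x c))
              / 2^d := by
          congr 1
          calc ∑ x : Fin (3*s) → Bool, ∑ zf : Fin n → Fin s → Bool,
              ∑ y : Fin n → Fin d → Bool, ∑ c : Fin d → Bool, gf zf (Vf y x) (Ext x c)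
              = ∑ x : Fin (3*s) → Bool, ∑ y : Fin n → Fin d → Bool,
                  ∑ zf : Fin n → Fin s → Bool, ∑ c : Fin d → Bool, gf zf (Vf y x) (Ext x c) :=
                Finset.sum_congr rfl fun x _ => Finset.sum_comm
            _ = ∑ y : Fin n → Fin d → Bool, ∑ x : Fin (3*s) → Bool,
                  ∑ zf : Fin n → Fin s → Bool, ∑ c : Fin d → Bool, gf zf (Vf y x) (Ext x c) :=
                Finset.sum_comm
            _ = ∑ y : Fin n → Fin d → Bool, ∑ zf : Fin n → Fin s → Bool,
                  ∑ x : Fin (3*s) → Bool, ∑ c : Fin d → Bool, gf zf (Vf y x) (Ext x c) :=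
                Finset.sum_congr rfl fun y _ => Finset.sum_comm
  have hnum2 : ∑ x : Fin (3*s) → Bool, ∑ y : Fin n → Fin d → Bool,
      ∑ zf : Fin n → Fin s → Bool, P.fn (fun i => if (i:ℕ) < k then Ext x (y i) else zf i)
      = (∑ y : Fin n → Fin d → Bool, ∑ zf : Fin n → Fin s → Bool,
          ∑ x : Fin (3*s) → Bool, ∑ ζ : Fin s → Bool, gf zf (Vf y x) ζ) / 2^s := by
    calc ∑ x : Fin (3*s) → Bool, ∑ y : Fin n → Fin d → Bool,
        ∑ zf : Fin n → Fin s → Bool, P.fn (fun i => if (i:ℕ) < k then Ext x (y i) else zf i)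
        = ∑ x : Fin (3*s) → Bool, ∑ y : Fin n → Fin d → Bool,
            ∑ zf : Fin n → Fin s → Bool, gf zf (Vf y x) (zf kf) := by
          exact Finset.sum_congr rfl fun x _ => Finset.sum_congr rfl fun y _ =>
            Finset.sum_congr rfl fun zf _ => hI2 x y zf
      _ = ∑ x : Fin (3*s) → Bool, ∑ y : Fin n → Fin d → Bool,
            (∑ zf : Fin n → Fin s → Bool, ∑ ζ : Fin s → Bool, gf zf (Vf y x) ζ) / 2^s :=
          Finset.sum_congr rfl fun x _ => Finset.sum_congr rfl fun y _ => hres2 x y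
      _ = (∑ x : Fin (3*s) → Bool, ∑ y : Fin n → Fin d → Bool,
            ∑ zf : Fin n → Fin s → Bool, ∑ ζ : Fin s → Bool, gf zf (Vf y x) ζ) / 2^s := by
          simp only [← Finset.sum_div]
      _ = (∑ y : Fin n → Fin d → Bool, ∑ zf : Fin n → Fin s → Bool,
            ∑ x : Fin (3*s) → Bool, ∑ ζ : Fin s → Bool, gf zf (Vf y x) ζ) / 2^s := by
          congr 1
          calc ∑ x : Fin (3*s) → Bool, ∑ y : Fin n → Fin d → Bool,
              ∑ zf : Fin n → Fin s → Bool, ∑ ζ : Fin s → Bool, gf zf (Vf y x) ζ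
              = ∑ y : Fin n → Fin d → Bool, ∑ x : Fin (3*s) → Bool,
                  ∑ zf : Fin n → Fin s → Bool, ∑ ζ : Fin s → Bool, gf zf (Vf y x) ζ :=
                Finset.sum_comm
            _ = ∑ y : Fin n → Fin d → Bool, ∑ zf : Fin n → Fin s → Bool,
                  ∑ x : Fin (3*s) → Bool, ∑ ζ : Fin s → Bool, gf zf (Vf y x) ζ :=
                Finset.sum_congr rfl fun y _ => Finset.sum_comm
  rw [hnum1, hnum2]
  -- rewrite the difference as an average of per-(y,zf) core deviations
  have heq : (∑ y : Fin n → Fin d → Bool, ∑ zf : Fin n → Fin s → Bool,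
        ∑ x : Fin (3*s) → Bool, ∑ c : Fin d → Bool, gf zf (Vf y x) (Ext x c)) / 2^d
        / (2^(3*s) * (((2:ℝ)^d)^n * ((2:ℝ)^s)^n))
      - (∑ y : Fin n → Fin d → Bool, ∑ zf : Fin n → Fin s → Bool,
        ∑ x : Fin (3*s) → Bool, ∑ ζ : Fin s → Bool, gf zf (Vf y x) ζ) / 2^s
        / (2^(3*s) * (((2:ℝ)^d)^n * ((2:ℝ)^s)^n))
      = (∑ y : Fin n → Fin d → Bool, ∑ zf : Fin n → Fin s → Bool,
          ((∑ x : Fin (3*s) → Bool, ∑ c : Fin d → Bool, gf zf (Vf y x) (Ext x c))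
              / (2^(3*s) * 2^d)
            - (∑ x : Fin (3*s) → Bool, ∑ ζ : Fin s → Bool, gf zf (Vf y x) ζ)
              / (2^(3*s) * 2^s)))
        / (((2:ℝ)^d)^n * ((2:ℝ)^s)^n) := by
    simp only [Finset.sum_sub_distrib, ← Finset.sum_div, sub_div, div_div]
    ring_nf
  rw [heq]
  rw [abs_div, abs_of_pos hYZ, div_le_iff₀ hYZ]
  calc |∑ y : Fin n → Fin d → Bool, ∑ zf : Fin n → Fin s → Bool,
        ((∑ x : Fin (3*s) → Bool, ∑ c : Fin d → Bool, gf zf (Vf y x) (Ext x c))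
            / (2^(3*s) * 2^d)
          - (∑ x : Fin (3*s) → Bool, ∑ ζ : Fin s → Bool, gf zf (Vf y x) ζ)
            / (2^(3*s) * 2^s))|
      ≤ ∑ y : Fin n → Fin d → Bool, ∑ zf : Fin n → Fin s → Bool,
        |(∑ x : Fin (3*s) → Bool, ∑ c : Fin d → Bool, gf zf (Vf y x) (Ext x c))
            / (2^(3*s) * 2^d)
          - (∑ x : Fin (3*s) → Bool, ∑ ζ : Fin s → Bool, gf zf (Vf y x) ζ)
            / (2^(3*s) * 2^s)| := by
        refine (Finset.abs_sum_le_sum_abs _ _).trans ?_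
        exact Finset.sum_le_sum fun y _ => Finset.abs_sum_le_sum_abs _ _
    _ ≤ ∑ y : Fin n → Fin d → Bool, ∑ zf : Fin n → Fin s → Bool, 3 * ε' := by
        refine Finset.sum_le_sum fun y _ => Finset.sum_le_sum fun zf _ => ?_
        exact st4_core hs hw Ext ε' hε' hExt (Vf y) (gf zf) (hg0 zf) (hg1 zf)
    _ = 3 * ε' * (((2:ℝ)^d)^n * ((2:ℝ)^s)^n) := by
        simp only [Finset.sum_const, Finset.card_univ, nsmul_eq_mul, Fintype.card_fun,
          Fintype.card_bool, Fintype.card_fin]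
        push_cast
        ring


end Stmt4Aux

-- STATEMENT 4
theorem stmt4 (w n s d : ℕ) (hw : 0 < w) (hn : 0 < n) (hs : 0 < s) (hd : 0 < d)
    (hsw : logb 2 (w : ℝ) ≤ (s : ℝ)) (ε : ℝ) (hε : 0 < ε) (hε1 : ε < 1)
    (Ext : (Fin (3 * s) → Bool) → (Fin d → Bool) → (Fin s → Bool))
    (hExt : IsExtractor (3 * s) d s Ext (2 * (s : ℝ)) (ε / (3 * n))) :
    ∀ f ∈ Bclass n s w,
      |uniformExp (fun xy : (Fin (3 * s) → Bool) × (Fin n → Fin d → Bool) =>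
          f (fun i => Ext xy.1 (xy.2 i))) - uniformExp f| ≤ ε := by
  intro f hf
  obtain ⟨P, rfl⟩ := hf
  have hs1 : 1 ≤ s := hs
  have hn0 : (0:ℝ) < n := by exact_mod_cast hn
  have hε'0 : (0:ℝ) ≤ ε / (3 * n) := by positivity
  -- `w ≤ 2^s` over the reals
  have hw2 : (w:ℝ) ≤ 2^s := by
    have hwpos : (0:ℝ) < w := by exact_mod_cast hw
    have h1 : (w:ℝ) = (2:ℝ) ^ (logb 2 (w:ℝ)) :=
      (Real.rpow_logb (by norm_num) (by norm_num) hwpos).symm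
    rw [h1]
    calc (2:ℝ) ^ (logb 2 (w:ℝ)) ≤ (2:ℝ) ^ (s:ℝ) :=
          Real.rpow_le_rpow_of_exponent_le one_le_two hsw
      _ = 2^s := by rw [Real.rpow_natCast]
  -- the extractor hypothesis, reformulated via st4_phi
  have hExt' : ∀ p : (Fin (3*s) → Bool) → ℝ, (∀ x, 0 ≤ p x) → (∑ x, p x) = 1 →
      (∀ x, p x ≤ ((2:ℝ) ^ (2*s))⁻¹) →
      (1/2) * ∑ z : Fin s → Bool, |∑ x, p x * st4_phi s d Ext z x| ≤ ε / (3 * n) := by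
    intro p h0 h1 h2
    have hbd : ∀ x, p x ≤ (2:ℝ) ^ (-(2 * (s:ℝ))) := by
      intro x
      have he : (2:ℝ) ^ (-(2 * (s:ℝ))) = ((2:ℝ) ^ (2*s))⁻¹ := by
        rw [show -(2 * (s:ℝ)) = -(((2*s : ℕ)):ℝ) by push_cast; ring,
          Real.rpow_neg (by norm_num), Real.rpow_natCast]
      rw [he]; exact h2 x
    have h := hExt p h0 h1 hbd
    have hh : ∀ z : Fin s → Bool, ∑ x, p x * st4_phi s d Ext z x
        = (∑ x, ∑ y : Fin d → Bool, p x * (if Ext x y = z then (1:ℝ) else 0)) / 2^d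
          - 1/2^s := by
      intro z
      simp only [st4_phi, mul_sub, Finset.sum_sub_distrib, mul_one_div, mul_one,
        ← mul_div_assoc, ← Finset.sum_div, Finset.mul_sum, h1]
    rw [Finset.sum_congr rfl fun z _ => by rw [hh z]]
    exact h
  -- the hybrids
  set H : ℕ → ℝ := fun k =>
    (∑ x : Fin (3*s) → Bool, ∑ y : Fin n → Fin d → Bool, ∑ zf : Fin n → Fin s → Bool,
      P.fn (fun i => if (i:ℕ) < k then Ext x (y i) else zf i))
    / (2^(3*s) * (((2:ℝ)^d)^n * ((2:ℝ)^s)^n)) with hH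
  have hstep : ∀ k, k < n → |H (k+1) - H k| ≤ 3 * (ε/(3*n)) := by
    intro k hk
    simp only [hH]
    exact st4_step hs1 hw2 P Ext _ hε'0 hExt' k hk
  -- telescoping
  have tele : ∀ k, k ≤ n → |H k - H 0| ≤ k * (3 * (ε/(3*n))) := by
    intro k
    induction k with
    | zero => intro _; simp
    | succ k ih =>
      intro hk1
      have h1 := ih (by omega)
      have h2 := hstep k (by omega)
      calc |H (k+1) - H 0| = |(H (k+1) - H k) + (H k - H 0)| := by
            rw [sub_add_sub_cancel]
        _ ≤ |H (k+1) - H k| + |H k - H 0| := abs_add_le _ _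
        _ ≤ 3 * (ε/(3*n)) + k * (3 * (ε/(3*n))) := add_le_add h2 h1
        _ = ((k+1 : ℕ) : ℝ) * (3 * (ε/(3*n))) := by push_cast; ring
  have hend : |H n - H 0| ≤ ε := by
    have h1 := tele n (le_refl n)
    have heq : (n:ℝ) * (3 * (ε/(3*(n:ℝ)))) = ε := by
      have hne : (n:ℝ) ≠ 0 := ne_of_gt hn0
      field_simp
    rw [heq] at h1
    exact h1
  -- card computations
  have hcX : ((Fintype.card (Fin (3*s) → Bool)):ℝ) = 2^(3*s) := by
    simp [Fintype.card_fun]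
  have hcY : ((Fintype.card (Fin n → Fin d → Bool)):ℝ) = ((2:ℝ)^d)^n := by
    have : Fintype.card (Fin n → Fin d → Bool) = (2^d)^n := by
      simp [Fintype.card_fun]
    rw [this]; push_cast; ring
  have hcZ : ((Fintype.card (Fin n → Fin s → Bool)):ℝ) = ((2:ℝ)^s)^n := by
    have : Fintype.card (Fin n → Fin s → Bool) = (2^s)^n := by
      simp [Fintype.card_fun]
    rw [this]; push_cast; ring
  have hZne : ((2:ℝ)^s)^n ≠ 0 := by positivity
  have hCne : (2:ℝ)^(3*s) * (((2:ℝ)^d)^n * ((2:ℝ)^s)^n) ≠ 0 := by positivity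
  -- identify the endpoints of the hybrid chain
  have hH0 : H 0 = uniformExp P.fn := by
    simp only [hH]
    have h0 : ∀ (x : Fin (3*s) → Bool) (y : Fin n → Fin d → Bool)
        (zf : Fin n → Fin s → Bool),
        P.fn (fun i => if ((i : Fin n) : ℕ) < 0 then Ext x (y i) else zf i) = P.fn zf := by
      intro x y zf
      have he : (fun i : Fin n => if ((i : Fin n) : ℕ) < 0 then Ext x (y i) else zf i) = zf := by
        funext i
        simp
      rw [he]
    rw [Finset.sum_congr rfl fun x _ => Finset.sum_congr rfl fun y _ =>
      Finset.sum_congr rfl fun zf _ => h0 x y zf]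
    simp only [Finset.sum_const, Finset.card_univ, nsmul_eq_mul]
    rw [uniformExp, hcX, hcY, hcZ]
    field_simp
  have hHn : H n = uniformExp (fun xy : (Fin (3*s) → Bool) × (Fin n → Fin d → Bool) =>
      P.fn (fun i => Ext xy.1 (xy.2 i))) := by
    simp only [hH]
    have h0 : ∀ (x : Fin (3*s) → Bool) (y : Fin n → Fin d → Bool)
        (zf : Fin n → Fin s → Bool),
        P.fn (fun i => if ((i : Fin n) : ℕ) < n then Ext x (y i) else zf i)
          = P.fn (fun i => Ext x (y i)) := by
      intro x y zf
      have he : (fun i : Fin n => if ((i : Fin n) : ℕ) < n then Ext x (y i) else zf i)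
          = fun i => Ext x (y i) := by
        funext i
        rw [if_pos i.isLt]
      rw [he]
    rw [Finset.sum_congr rfl fun x _ => Finset.sum_congr rfl fun y _ =>
      Finset.sum_congr rfl fun zf _ => h0 x y zf]
    simp only [Finset.sum_const, Finset.card_univ, nsmul_eq_mul]
    rw [uniformExp, Fintype.sum_prod_type
      (f := fun xy : (Fin (3*s) → Bool) × (Fin n → Fin d → Bool) =>
        P.fn (fun i => Ext xy.1 (xy.2 i)))]
    rw [Fintype.card_prod, Nat.cast_mul, hcX, hcY]
    dsimp only
    simp only [← Finset.mul_sum]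
    field_simp
    rw [hcZ]
    ring
  rw [hHn] at hend
  rw [hH0] at hend
  exact hend
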